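/- Let m ≥ 1 and let Y ∈ ℝ^{m×m} be a matrix with Y(i,i) = 1 for every i and Σ_{j≠i} |Y(i,j)| ≤ 1 for every i. Then rank(Y) ≥ m/2. -/

import Mathlib

open Finset

open Matrix Module RealInnerProductSpace
/-- Any real matrix factors as `B * C` where the columns of `B` form an
orthonormal family of size `rank Y`. -/
lemma aux_rank_factorization (m : ℕ) (Y : Matrix (Fin m) (Fin m) ℝ) :
    ∃ (B : Matrix (Fin m) (Fin Y.rank) ℝ) (C : Matrix (Fin Y.rank) (Fin m) ℝ),
      Bᵀ * B = 1 ∧ Y = B * C := by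
  classical
  set e : (Fin m → ℝ) ≃ₗ[ℝ] EuclideanSpace ℝ (Fin m) :=
    (WithLp.linearEquiv 2 ℝ (Fin m → ℝ)).symm with he
  set V : Submodule ℝ (EuclideanSpace ℝ (Fin m)) :=
    (LinearMap.range Y.mulVecLin).map (e : (Fin m → ℝ) →ₗ[ℝ] EuclideanSpace ℝ (Fin m)) with hV
  have hdim : finrank ℝ V = Y.rank := by
    rw [hV]; exact LinearEquiv.finrank_map_eq e _
  let b : OrthonormalBasis (Fin Y.rank) ℝ V :=
    (stdOrthonormalBasis ℝ V).reindex (finCongr hdim)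
  have hmem : ∀ j, e (Yᵀ j) ∈ V := fun j =>
    Submodule.mem_map_of_mem ⟨Pi.single j 1, by
      rw [Matrix.mulVecLin_apply, Matrix.mulVec_single_one]; rfl⟩
  let col : Fin m → V := fun j => ⟨e (Yᵀ j), hmem j⟩
  refine ⟨Matrix.of fun i k => ((b k : EuclideanSpace ℝ (Fin m)) i),
    Matrix.of fun k j => b.repr (col j) k, ?_, ?_⟩
  · ext k l
    have horth := orthonormal_iff_ite.mp b.orthonormal k l
    have : (@inner ℝ _ _ (b k) (b l)) = ∑ i, ((b k : EuclideanSpace ℝ (Fin m)) i)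
        * ((b l : EuclideanSpace ℝ (Fin m)) i) := by
      rw [Submodule.coe_inner, PiLp.inner_apply]
      simp [RCLike.inner_apply]
      exact Finset.sum_congr rfl fun _ _ => mul_comm _ _
    rw [this] at horth
    simpa [Matrix.mul_apply, Matrix.one_apply] using horth
  · ext i j
    have hs := congrArg (fun v : V => (WithLp.linearEquiv 2 ℝ (Fin m → ℝ))
        (v : EuclideanSpace ℝ (Fin m))) (b.sum_repr (col j))
    simp only [Submodule.coe_sum, SetLike.val_smul, map_sum, _root_.map_smul] at hs
    have hc : (WithLp.linearEquiv 2 ℝ (Fin m → ℝ))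
        ((col j : EuclideanSpace ℝ (Fin m))) = Yᵀ j := by
      simp [col, he]
    rw [hc] at hs
    have hs' := congrFun hs i
    simp only [Finset.sum_apply, Pi.smul_apply, smul_eq_mul,
      WithLp.coe_linearEquiv,
      Matrix.transpose_apply] at hs'
    rw [Matrix.mul_apply, ← hs']
    exact Finset.sum_congr rfl fun k _ => by simp [Matrix.of_apply]; ring

lemma aux_main (m r : ℕ) (hm : 1 ≤ m)
    (Y : Matrix (Fin m) (Fin m) ℝ)
    (hdiag : ∀ i, Y i i = 1)
    (hoff : ∀ i, ∑ j ∈ Finset.univ.erase i, |Y i j| ≤ 1)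
    (B : Matrix (Fin m) (Fin r) ℝ) (C : Matrix (Fin r) (Fin m) ℝ)
    (hBB : Bᵀ * B = 1) (hYBC : Y = B * C) :
    (m : ℝ) / 2 ≤ (r : ℝ) := by
  classical
  subst hYBC
  -- trace identity
  have htr : (m : ℝ) = ∑ p : Fin m × Fin r, B p.1 p.2 * C p.2 p.1 := by
    rw [Fintype.sum_prod_type]
    calc (m : ℝ) = ∑ i : Fin m, (B * C) i i := by simp [hdiag]
    _ = ∑ i : Fin m, ∑ k : Fin r, B i k * C k i := by
        refine Finset.sum_congr rfl fun i _ => ?_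
        rw [Matrix.mul_apply]
  -- sum of squares of B is r
  have hBsq : ∑ p : Fin m × Fin r, (B p.1 p.2) ^ 2 = (r : ℝ) := by
    have h := congrArg Matrix.trace hBB
    rw [Matrix.trace_one] at h
    rw [Fintype.sum_prod_type_right]
    calc ∑ k : Fin r, ∑ i : Fin m, (B i k) ^ 2
        = ∑ k : Fin r, (Bᵀ * B) k k := by
          refine Finset.sum_congr rfl fun k _ => ?_
          rw [Matrix.mul_apply]
          exact Finset.sum_congr rfl fun i _ => by
            rw [Matrix.transpose_apply]; ring
    _ = (r : ℝ) := by
          rw [show ∑ k : Fin r, (Bᵀ * B) k k = (Bᵀ * B).trace from rfl, h]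
          simp
  -- sum of squares of C equals Frobenius norm squared of Y
  have hYC : (B * C)ᵀ * (B * C) = Cᵀ * C := by
    rw [Matrix.transpose_mul, Matrix.mul_assoc, ← Matrix.mul_assoc Bᵀ, hBB,
      Matrix.one_mul]
  have hCsq : ∑ p : Fin m × Fin r, (C p.2 p.1) ^ 2
      = ∑ i : Fin m, ∑ j : Fin m, ((B * C) i j) ^ 2 := by
    have h := congrArg Matrix.trace hYC
    simp only [Matrix.trace, Matrix.diag, Matrix.mul_apply, Matrix.transpose_apply] at h
    rw [Fintype.sum_prod_type]
    calc ∑ i : Fin m, ∑ k : Fin r, (C k i) ^ 2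
        = ∑ i : Fin m, ∑ k : Fin r, C k i * C k i := by
          simp [sq]
    _ = ∑ i : Fin m, ∑ j : Fin m, (B * C) j i * (B * C) j i := by
          rw [← h]
          refine Finset.sum_congr rfl fun i _ => Finset.sum_congr rfl fun j _ => ?_
          rw [Matrix.mul_apply]
    _ = ∑ i : Fin m, ∑ j : Fin m, ((B * C) i j) ^ 2 := by
          rw [Finset.sum_comm]
          simp [sq]
  -- Frobenius bound
  have hF : ∑ i : Fin m, ∑ j : Fin m, ((B * C) i j) ^ 2 ≤ 2 * m := by
    have hrow : ∀ i : Fin m, ∑ j : Fin m, ((B * C) i j) ^ 2 ≤ 2 := by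
      intro i
      have h1 : ∑ j ∈ Finset.univ.erase i, ((B * C) i j) ^ 2
          ≤ (∑ j ∈ Finset.univ.erase i, |(B * C) i j|) ^ 2 := by
        have := Finset.sum_sq_le_sq_sum_of_nonneg
          (s := Finset.univ.erase i) (f := fun j => |(B * C) i j|) (fun j _ => abs_nonneg _)
        simpa [sq_abs] using this
      have h2 : (∑ j ∈ Finset.univ.erase i, |(B * C) i j|) ^ 2 ≤ 1 := by
        have hnn : (0:ℝ) ≤ ∑ j ∈ Finset.univ.erase i, |(B * C) i j| :=
          Finset.sum_nonneg fun j _ => abs_nonneg _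
        nlinarith [hoff i]
      have h3 : ∑ j : Fin m, ((B * C) i j) ^ 2
          = ((B * C) i i) ^ 2 + ∑ j ∈ Finset.univ.erase i, ((B * C) i j) ^ 2 :=
        (Finset.add_sum_erase _ _ (Finset.mem_univ i)).symm
      rw [h3, hdiag i]
      nlinarith
    calc ∑ i : Fin m, ∑ j : Fin m, ((B * C) i j) ^ 2 ≤ ∑ i : Fin m, (2:ℝ) :=
          Finset.sum_le_sum fun i _ => hrow i
    _ = 2 * m := by simp [mul_comm]
  -- Cauchy–Schwarz
  have hCS := Finset.sum_mul_sq_le_sq_mul_sq Finset.univ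
    (fun p : Fin m × Fin r => B p.1 p.2) (fun p : Fin m × Fin r => C p.2 p.1)
  rw [← htr, hBsq, hCsq] at hCS
  -- conclude
  have hFnn : (0:ℝ) ≤ ∑ i : Fin m, ∑ j : Fin m, ((B * C) i j) ^ 2 :=
    Finset.sum_nonneg fun i _ => Finset.sum_nonneg fun j _ => sq_nonneg _
  have hrnn : (0:ℝ) ≤ (r : ℝ) := Nat.cast_nonneg r
  have hm' : (1:ℝ) ≤ (m:ℝ) := by exact_mod_cast hm
  nlinarith [mul_le_mul_of_nonneg_left hF hrnn]

/-- A real `m × m` matrix with unit diagonal whose off-diagonal entries have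
row-wise `ℓ₁` norm at most `1` has rank at least `m/2`. -/
theorem rank_ge_of_unit_diag_dominant (m : ℕ) (hm : 1 ≤ m)
    (Y : Matrix (Fin m) (Fin m) ℝ)
    (hdiag : ∀ i, Y i i = 1)
    (hoff : ∀ i, ∑ j ∈ Finset.univ.erase i, |Y i j| ≤ 1) :
    (m : ℝ) / 2 ≤ (Y.rank : ℝ) := by
  obtain ⟨B, C, hBB, hYBC⟩ := aux_rank_factorization m Y
  exact aux_main m Y.rank hm Y hdiag hoff B C hBB hYBC
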